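/- For every integer n ≥ 1, the denominator of the n-th Bernoulli polynomial equals the radical of the denominator of the sum-of-powers polynomial S_n(x), i.e., DB_n = rad(denom(S_n(x))) = rad((n+1) · D_{n+1}). -/

import Mathlib

/-- A rational polynomial has only integral coefficients. -/
def IsIntPoly (f : Polynomial ℚ) : Prop := ∀ i, (f.coeff i).den = 1

/-- The least positive integer `d` such that `d • f` has only integral coefficients. -/
noncomputable def polyDenom (f : Polynomial ℚ) : ℕ :=
  sInf {d : ℕ | 0 < d ∧ IsIntPoly ((d : ℚ) • f)}

/-- Sum of base-`p` digits of `n`. -/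
def sd (p n : ℕ) : ℕ := (Nat.digits p n).sum

/-- Radical (squarefree kernel) of `n`. -/
def rad (n : ℕ) : ℕ := ∏ p ∈ n.primeFactors, p

/-- `D n = denom (B_n(x) - B_n)`. -/
noncomputable def D (n : ℕ) : ℕ :=
  polyDenom (Polynomial.bernoulli n - Polynomial.C (bernoulli n))

/-- `DB n = denom (B_n(x))`. -/
noncomputable def DB (n : ℕ) : ℕ := polyDenom (Polynomial.bernoulli n)

/-- `D̂ n`: product of primes `p` with `p ∤ n` and `s_p(n) ≥ p`.
(Any such prime satisfies `p ≤ s_p(n) ≤ n`.) -/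
def Dhat (n : ℕ) : ℕ :=
  ∏ p ∈ (Finset.range (n + 1)).filter (fun p => p.Prime ∧ ¬ p ∣ n ∧ p ≤ sd p n), p

/-- `D̃ n`: product of primes `p` with `p ∣ n` and `s_p(n) ≥ p`. -/
def Dtilde (n : ℕ) : ℕ :=
  ∏ p ∈ (Finset.range (n + 1)).filter (fun p => p.Prime ∧ p ∣ n ∧ p ≤ sd p n), p

/-- `Ď n`: product of primes `p` with `p ∣ n` and `s_p(n) < p`. -/
def Dcheck (n : ℕ) : ℕ :=
  ∏ p ∈ (Finset.range (n + 1)).filter (fun p => p.Prime ∧ p ∣ n ∧ sd p n < p), p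

/-- `D⁺ n`: product of primes `p` with `p > √n` and `s_p(n) ≥ p`. -/
def Dplus (n : ℕ) : ℕ :=
  ∏ p ∈ (Finset.range (n + 1)).filter (fun p => p.Prime ∧ n < p ^ 2 ∧ p ≤ sd p n), p

/-- The sum-of-powers polynomial `S_n(x) = (B_{n+1}(x) - B_{n+1}) / (n+1)`. -/
noncomputable def Spoly (n : ℕ) : Polynomial ℚ :=
  Polynomial.C (((n : ℚ) + 1)⁻¹) *
    (Polynomial.bernoulli (n + 1) - Polynomial.C (bernoulli (n + 1)))


open Finset

section lcmNat
variable {ι : Type*}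

lemma nat_lcm_ne_zero {s : Finset ι} {g : ι → ℕ} (hg : ∀ i ∈ s, g i ≠ 0) : s.lcm g ≠ 0 := by
  classical
  induction s using Finset.induction_on with
  | empty => simp
  | @insert a s ha ih =>
    rw [Finset.lcm_insert, lcm_eq_nat_lcm]
    exact Nat.lcm_ne_zero (hg a (by simp)) (ih fun i hi => hg i (by simp [hi]))

lemma nat_prime_dvd_lcm {p : ℕ} (hp : p.Prime) {s : Finset ι} {g : ι → ℕ}
    (h : p ∣ s.lcm g) : ∃ i ∈ s, p ∣ g i := by
  classical
  induction s using Finset.induction_on with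
  | empty => simp at h; exact absurd h hp.ne_one
  | @insert a s ha ih =>
    rw [Finset.lcm_insert] at h
    have := h.trans (lcm_dvd (dvd_mul_right _ _) (dvd_mul_left _ _) :
      lcm (g a) (s.lcm g) ∣ g a * s.lcm g)
    rcases (Nat.Prime.dvd_mul hp).1 this with h' | h'
    · exact ⟨a, by simp, h'⟩
    · rcases ih h' with ⟨i, hi, hdvd⟩
      exact ⟨i, by simp [hi], hdvd⟩

lemma nat_squarefree_lcm {s : Finset ι} {g : ι → ℕ}
    (hg : ∀ i ∈ s, Squarefree (g i)) : Squarefree (s.lcm g) := by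
  classical
  induction s using Finset.induction_on with
  | empty => simp
  | @insert a s ha ih =>
    rw [Finset.lcm_insert, lcm_eq_nat_lcm]
    have h1 : g a ≠ 0 := (hg a (by simp)).ne_zero
    have ih' : Squarefree (s.lcm g) := ih fun i hi => hg i (by simp [hi])
    have h2 : s.lcm g ≠ 0 := ih'.ne_zero
    rw [Nat.squarefree_iff_factorization_le_one (Nat.lcm_ne_zero h1 h2)]
    intro p
    rw [Nat.factorization_lcm h1 h2]
    simp only [Finsupp.sup_apply]
    exact sup_le ((Nat.squarefree_iff_factorization_le_one h1).1 (hg a (by simp)) p)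
      ((Nat.squarefree_iff_factorization_le_one h2).1 ih' p)

end lcmNat

lemma den_natCast_mul_eq_one_iff (d : ℕ) (q : ℚ) :
    ((d : ℚ) * q).den = 1 ↔ q.den ∣ d := by
  constructor
  · intro h
    rw [Rat.den_eq_one_iff] at h
    have h2 : ((d : ℚ) * q).num * q.den = (d : ℚ) * q.num := by
      rw [h, mul_assoc, Rat.mul_den_eq_num]
    have h3 : ((d : ℚ) * q).num * (q.den : ℤ) = (d : ℤ) * q.num := by exact_mod_cast h2
    have h4 : (q.den : ℤ) ∣ (d : ℤ) * q.num := ⟨((d : ℚ) * q).num, by linarith⟩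
    have h5 : q.den ∣ d * q.num.natAbs := by
      have := Int.natAbs_dvd_natAbs.2 h4
      simpa [Int.natAbs_mul] using this
    exact (Nat.Coprime.dvd_of_dvd_mul_right (Nat.Coprime.symm q.reduced) h5)
  · rintro ⟨t, rfl⟩
    have : ((q.den * t : ℕ) : ℚ) * q = ((t * q.num : ℤ) : ℚ) := by
      push_cast
      rw [mul_comm (q.den : ℚ) t, mul_assoc, Rat.den_mul_eq_num]
    rw [this, Rat.den_intCast]

lemma polyDenom_eq_lcm (f : Polynomial ℚ) :
    polyDenom f = f.support.lcm fun i => (f.coeff i).den := by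
  classical
  set L := f.support.lcm fun i => (f.coeff i).den with hL
  have hden : ∀ i, (f.coeff i).den ∣ L := by
    intro i
    by_cases h : i ∈ f.support
    · exact Finset.dvd_lcm h
    · simp [Polynomial.notMem_support_iff.1 h]
  have hLpos : 0 < L := Nat.pos_of_ne_zero (nat_lcm_ne_zero fun i _ => Rat.den_nz _)
  have hset : {d : ℕ | 0 < d ∧ IsIntPoly ((d : ℚ) • f)} = {d : ℕ | 0 < d ∧ L ∣ d} := by
    ext d
    simp only [Set.mem_setOf_eq]
    apply and_congr_right
    intro _
    unfold IsIntPoly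
    constructor
    · intro h
      apply Finset.lcm_dvd
      intro i _
      have := h i
      rw [Polynomial.coeff_smul, smul_eq_mul, den_natCast_mul_eq_one_iff] at this
      exact this
    · intro h i
      rw [Polynomial.coeff_smul, smul_eq_mul, den_natCast_mul_eq_one_iff]
      exact dvd_trans (hden i) h
  unfold polyDenom
  rw [hset]
  apply le_antisymm
  · exact Nat.sInf_le ⟨hLpos, dvd_rfl⟩
  · have hmem := Nat.sInf_mem (s := {d : ℕ | 0 < d ∧ L ∣ d}) ⟨L, hLpos, dvd_rfl⟩
    exact Nat.le_of_dvd hmem.1 hmem.2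

lemma polyDenom_pos (f : Polynomial ℚ) : 0 < polyDenom f := by
  rw [polyDenom_eq_lcm]; exact Nat.pos_of_ne_zero (nat_lcm_ne_zero fun i _ => Rat.den_nz _)

lemma den_coeff_dvd_polyDenom (f : Polynomial ℚ) (i : ℕ) :
    (f.coeff i).den ∣ polyDenom f := by
  rw [polyDenom_eq_lcm]
  by_cases h : i ∈ f.support
  · exact Finset.dvd_lcm h
  · simp [Polynomial.notMem_support_iff.1 h]

lemma prime_dvd_polyDenom_iff {p : ℕ} (hp : p.Prime) (f : Polynomial ℚ) :
    p ∣ polyDenom f ↔ ∃ i, p ∣ (f.coeff i).den := by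
  constructor
  · intro h
    rw [polyDenom_eq_lcm] at h
    rcases nat_prime_dvd_lcm hp h with ⟨i, _, hi⟩
    exact ⟨i, hi⟩
  · rintro ⟨i, h⟩
    exact h.trans (den_coeff_dvd_polyDenom f i)

lemma squarefree_polyDenom (f : Polynomial ℚ) (h : ∀ i, Squarefree (f.coeff i).den) :
    Squarefree (polyDenom f) := by
  rw [polyDenom_eq_lcm]
  exact nat_squarefree_lcm fun i _ => h i


lemma sd_le (p n : ℕ) : sd p n ≤ n := Nat.digit_sum_le p n

lemma sd_pos {p n : ℕ} (hp : 2 ≤ p) (hn : 1 ≤ n) : 1 ≤ sd p n := by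
  have hne : Nat.digits p n ≠ [] := Nat.digits_ne_nil_iff_ne_zero.2 (by omega)
  have hlast := Nat.getLast_digit_ne_zero p (show n ≠ 0 by omega)
  have hmem := List.getLast_mem hne
  have := List.single_le_sum (fun (x : ℕ) _ => Nat.zero_le x) _ hmem
  unfold sd; omega

lemma sd_modEq (p n : ℕ) (hp : 2 ≤ p) : n ≡ sd p n [MOD p - 1] := by
  rcases eq_or_lt_of_le hp with h | h
  · subst h
    simp [Nat.ModEq, Nat.mod_one]
  · have h1 : p % (p - 1) = 1 := by
      rw [Nat.mod_eq_sub_mod (by omega), show p - (p - 1) = 1 by omega]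
      exact Nat.mod_eq_of_lt (by omega)
    exact Nat.modEq_digits_sum (p - 1) p h1 n

lemma sd_eq_mod_add (p n : ℕ) (hp : 2 ≤ p) : sd p n = n % p + sd p (n / p) := by
  rcases Nat.eq_zero_or_pos n with rfl | hn
  · simp [sd]
  · unfold sd
    rw [Nat.digits_def' (by omega : 1 < p) hn]
    simp

lemma sd_succ_of_not_dvd {p n : ℕ} (hp : 2 ≤ p) (h : ¬ p ∣ (n + 1)) :
    sd p (n + 1) = sd p n + 1 := by
  have hr : n % p < p := Nat.mod_lt _ (by omega)
  have hrp : n % p + 1 < p := by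
    rcases eq_or_lt_of_le (show n % p + 1 ≤ p by omega) with h1 | h1
    · exfalso
      apply h
      have := Nat.div_add_mod n p
      have h2 : p * (n / p + 1) = p * (n / p) + p := by ring
      exact ⟨n / p + 1, by omega⟩
    · exact h1
  have hmod : (n + 1) % p = n % p + 1 := by
    have hn1 : n + 1 = (n % p + 1) + p * (n / p) := by
      have := Nat.div_add_mod n p; omega
    rw [hn1, Nat.add_mul_mod_self_left, Nat.mod_eq_of_lt hrp]
  have hdiv : (n + 1) / p = n / p := Nat.succ_div_of_not_dvd h
  rw [sd_eq_mod_add p (n+1) hp, hmod, hdiv, sd_eq_mod_add p n hp]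
  omega

lemma sd_ge_of_dvd_succ {p n : ℕ} (hp : 2 ≤ p) (h : p ∣ (n + 1)) :
    p - 1 ≤ sd p n := by
  have hr : n % p < p := Nat.mod_lt _ (by omega)
  have hrp : n % p = p - 1 := by
    by_contra hne
    apply absurd h
    intro hdvd
    have hmod : (n + 1) % p = n % p + 1 := by
      have hn1 : n + 1 = (n % p + 1) + p * (n / p) := by
        have := Nat.div_add_mod n p; omega
      rw [hn1, Nat.add_mul_mod_self_left, Nat.mod_eq_of_lt (by omega)]
    rw [Nat.dvd_iff_mod_eq_zero] at hdvd
    omega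
  have := sd_eq_mod_add p n hp
  omega

lemma sd_ge_of_modeq {p n : ℕ} (hp : 2 ≤ p) (hn : 1 ≤ n) (h : (p - 1) ∣ n) :
    p - 1 ≤ sd p n := by
  have h1 : (p - 1) ∣ sd p n := (Nat.modEq_zero_iff_dvd).1
    (((sd_modEq p n hp).symm.trans (Nat.modEq_zero_iff_dvd.2 h)))
  exact Nat.le_of_dvd (sd_pos hp hn) h1

lemma sum_digits_ofDigits {p : ℕ} (hp : 2 ≤ p) :
    ∀ (l : List ℕ), (∀ x ∈ l, x < p) → sd p (Nat.ofDigits p l) = l.sum := by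
  intro l
  induction l with
  | nil => intro _; simp [sd, Nat.ofDigits]
  | cons d L ih =>
    intro hlt
    have hd : d < p := hlt d (by simp)
    rw [Nat.ofDigits_cons]
    have h1 : (d + p * Nat.ofDigits p L) % p = d := by
      rw [Nat.add_mul_mod_self_left, Nat.mod_eq_of_lt hd]
    have h2 : (d + p * Nat.ofDigits p L) % p + (d + p * Nat.ofDigits p L) / p * p
        = d + p * Nat.ofDigits p L := Nat.mod_add_div' _ _
    have h3 : (d + p * Nat.ofDigits p L) / p = Nat.ofDigits p L := by
      have hp0 : 0 < p := by omega
      rw [Nat.add_mul_div_left _ _ hp0, Nat.div_eq_of_lt hd, zero_add]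
    have : Nat.ofDigits p L ≤ (Nat.ofDigits p L : ℕ) := le_refl _
    rw [sd_eq_mod_add p _ hp, h1, h3, ih (fun x hx => hlt x (by simp [hx]))]
    simp [List.sum_cons]
  
lemma forall₂_split {p : ℕ} : ∀ {l L : List ℕ}, List.Forall₂ (· ≤ ·) l L →
    Nat.ofDigits p l + Nat.ofDigits p (List.zipWith (· - ·) L l) = Nat.ofDigits p L ∧
    l.sum + (List.zipWith (· - ·) L l).sum = L.sum := by
  intro l L h
  induction h with
  | nil => simp [Nat.ofDigits]
  | @cons a b l' L' hab h ih =>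
    obtain ⟨c, rfl⟩ : ∃ c, b = a + c := ⟨b - a, by omega⟩
    simp only [List.zipWith_cons_cons, Nat.ofDigits_cons, List.sum_cons] at *
    constructor
    · rw [Nat.add_sub_cancel_left, ← ih.1]; ring
    · rw [Nat.add_sub_cancel_left, ← ih.2]; ring

lemma exists_subdigits : ∀ (L : List ℕ) (t : ℕ), t ≤ L.sum →
    ∃ l, List.Forall₂ (· ≤ ·) l L ∧ l.sum = t := by
  intro L
  induction L with
  | nil => intro t ht; simp at ht; exact ⟨[], List.Forall₂.nil, by simp [ht]⟩
  | cons d L ih =>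
    intro t ht
    simp only [List.sum_cons] at ht
    obtain ⟨l', hl', hsum⟩ := ih (t - min d t) (by omega)
    exact ⟨min d t :: l', List.Forall₂.cons (by omega) hl', by simp only [List.sum_cons, hsum]; omega⟩

lemma val_choose_identity {p k m : ℕ} (hp : p.Prime) (hk : k ≤ m) :
    m - sd p m = (p - 1) * padicValNat p (m.choose k) + (k - sd p k) + ((m - k) - sd p (m - k)) := by
  haveI : Fact p.Prime := ⟨hp⟩
  have key := Nat.choose_mul_factorial_mul_factorial hk
  have hc : m.choose k ≠ 0 := (Nat.choose_pos hk).ne'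
  have h1 : padicValNat p (m.choose k * k.factorial * (m - k).factorial)
      = padicValNat p (m.choose k) + padicValNat p k.factorial
        + padicValNat p (m - k).factorial := by
    rw [padicValNat.mul (Nat.mul_ne_zero hc (Nat.factorial_ne_zero _)) (Nat.factorial_ne_zero _),
        padicValNat.mul hc (Nat.factorial_ne_zero _)]
  rw [key] at h1
  have h2 := sub_one_mul_padicValNat_factorial (p := p) m
  have h3 := sub_one_mul_padicValNat_factorial (p := p) k
  have h4 := sub_one_mul_padicValNat_factorial (p := p) (m - k)
  have h5 : (p - 1) * padicValNat p m.factorial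
      = (p - 1) * padicValNat p (m.choose k) + (p - 1) * padicValNat p k.factorial
        + (p - 1) * padicValNat p (m - k).factorial := by
    rw [h1]; ring
  have d1 := Nat.digit_sum_le p m
  have d2 := Nat.digit_sum_le p k
  have d3 := Nat.digit_sum_le p (m - k)
  unfold sd
  omega

lemma not_dvd_choose_iff_sd {p k m : ℕ} (hp : p.Prime) (hk : k ≤ m) :
    ¬ p ∣ m.choose k ↔ sd p k + sd p (m - k) = sd p m := by
  have hne : m.choose k ≠ 0 := (Nat.choose_pos hk).ne'
  have hiff : ¬ p ∣ m.choose k ↔ padicValNat p (m.choose k) = 0 := by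
    rw [padicValNat.eq_zero_iff]
    constructor
    · intro h; tauto
    · intro h
      rcases h with h | h | h
      · exact absurd h hp.ne_one
      · exact absurd h hne
      · exact h
  rw [hiff]
  have key := val_choose_identity hp hk
  have d1 := sd_le p m
  have d2 := sd_le p k
  have d3 := sd_le p (m - k)
  have hp2 := hp.two_le
  constructor
  · intro h
    rw [h, Nat.mul_zero] at key
    omega
  · intro h
    set W := (p - 1) * padicValNat p (m.choose k) with hW
    have hW0 : W = 0 := by omega
    rcases Nat.mul_eq_zero.1 hW0 with h' | h'
    · omega
    · exact h'

lemma forall₂_split' {p : ℕ} : ∀ {l L : List ℕ}, List.Forall₂ (· ≤ ·) l L →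
    Nat.ofDigits p l + Nat.ofDigits p (List.zipWith (· - ·) L l) = Nat.ofDigits p L ∧
    l.sum + (List.zipWith (· - ·) L l).sum = L.sum ∧
    (∀ x ∈ l, ∃ y ∈ L, x ≤ y) ∧
    (∀ x ∈ List.zipWith (· - ·) L l, ∃ y ∈ L, x ≤ y) := by
  intro l L h
  induction h with
  | nil => simp [Nat.ofDigits]
  | @cons a b l' L' hab h ih =>
    obtain ⟨c, rfl⟩ : ∃ c, b = a + c := ⟨b - a, by omega⟩
    simp only [List.zipWith_cons_cons, Nat.ofDigits_cons, List.sum_cons] at *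
    refine ⟨?_, ?_, ?_, ?_⟩
    · rw [Nat.add_sub_cancel_left, ← ih.1]; ring
    · rw [Nat.add_sub_cancel_left, ← ih.2.1]; ring
    · intro x hx
      rcases List.mem_cons.1 hx with hx | hx
      · exact ⟨a + c, by simp, by omega⟩
      · rcases ih.2.2.1 x hx with ⟨y, hy, hxy⟩
        exact ⟨y, by simp [hy], hxy⟩
    · intro x hx
      rw [Nat.add_sub_cancel_left] at hx
      rcases List.mem_cons.1 hx with hx | hx
      · exact ⟨a + c, by simp, by omega⟩
      · rcases ih.2.2.2 x hx with ⟨y, hy, hxy⟩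
        exact ⟨y, by simp [hy], hxy⟩

lemma exists_good_k' {p m t : ℕ} (hp : p.Prime) (ht1 : 1 ≤ t) (htp : t < p)
    (hts : t ≤ sd p m) (hsp : p ≤ sd p m) :
    ∃ l k, List.Forall₂ (· ≤ ·) l (Nat.digits p m) ∧ l.sum = t ∧ k = Nat.ofDigits p l ∧
      1 ≤ k ∧ k < m ∧ sd p k = t ∧ t ≤ k ∧ ¬ p ∣ m.choose k := by
  have hp2 := hp.two_le
  have hm : 1 ≤ m := by
    by_contra h
    have : m = 0 := by omega
    subst this
    simp [sd] at hsp; omega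
  obtain ⟨l, hl, hsum⟩ := exists_subdigits (Nat.digits p m) t hts
  set k := Nat.ofDigits p l with hk
  have hsplit := forall₂_split' (p := p) hl
  have hlt : ∀ x ∈ l, x < p := by
    intro x hx
    rcases hsplit.2.2.1 x hx with ⟨y, hy, hxy⟩
    exact lt_of_le_of_lt hxy (Nat.digits_lt_base (by omega) hy)
  have hzlt : ∀ x ∈ List.zipWith (· - ·) (Nat.digits p m) l, x < p := by
    intro x hx
    rcases hsplit.2.2.2 x hx with ⟨y, hy, hxy⟩
    exact lt_of_le_of_lt hxy (Nat.digits_lt_base (by omega) hy)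
  have hofd : Nat.ofDigits p (Nat.digits p m) = m := Nat.ofDigits_digits p m
  have hkm : k + Nat.ofDigits p (List.zipWith (· - ·) (Nat.digits p m) l) = m := by
    rw [hk, hsplit.1, hofd]
  have hkle : k ≤ m := by omega
  have hsdk : sd p k = t := by rw [hk, sum_digits_ofDigits hp2 l hlt, hsum]
  have hk1 : t ≤ k := hsum ▸ hk ▸ Nat.sum_le_ofDigits l (by omega)
  have hkne : k ≠ m := by
    intro h
    rw [← h] at hsp
    omega
  have hsdmk : sd p (m - k) = sd p m - t := by
    have : m - k = Nat.ofDigits p (List.zipWith (· - ·) (Nat.digits p m) l) := by omega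
    rw [this, sum_digits_ofDigits hp2 _ hzlt]
    have := hsplit.2.1
    unfold sd
    omega
  have hnd : ¬ p ∣ m.choose k := by
    rw [not_dvd_choose_iff_sd hp hkle, hsdk, hsdmk]
    omega
  exact ⟨l, k, hl, hsum, hk, by omega, by omega, hsdk, hk1, hnd⟩

lemma exists_good_k {p m : ℕ} (hp : p.Prime) (hs : p ≤ sd p m) :
    ∃ k, 1 ≤ k ∧ k < m ∧ (p - 1) ∣ k ∧ (Even k ∨ k = 1) ∧ ¬ p ∣ m.choose k := by
  have hp2 := hp.two_le
  have hm : 1 ≤ m := by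
    by_contra h
    have : m = 0 := by omega
    subst this
    simp [sd] at hs; omega
  rcases eq_or_lt_of_le hp2 with hp2' | hp3
  · -- p = 2
    have hp2'' : p = 2 := hp2'.symm
    subst hp2''
    rcases Nat.even_or_odd m with hme | hmo
    · -- m even: select t = 1, k is even since first digit of m is 0
      obtain ⟨l, k, hl, hsum, hkdef, hk1, hkm, hsdk, htk, hnd⟩ :=
        exists_good_k' hp (t := 1) le_rfl (by omega) (by omega) hs
      refine ⟨k, hk1, hkm, one_dvd _, Or.inl ?_, hnd⟩
      -- head of digits of m is 0
      have hdig : Nat.digits 2 m = 0 :: Nat.digits 2 (m / 2) := by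
        rw [Nat.digits_def' (by omega : 1 < 2) (by omega : 0 < m)]
        congr 1
        exact Nat.even_iff.1 hme

      rw [hdig] at hl
      cases hl with
      | @cons a b l' L' hab htail =>
        have ha : a = 0 := by omega
        rw [hkdef, Nat.ofDigits_cons, ha]
        exact ⟨Nat.ofDigits 2 l', by ring⟩
    · -- m odd: k = 1
      refine ⟨1, le_rfl, ?_, one_dvd _, Or.inr rfl, ?_⟩
      · -- 1 < m since sd 2 m ≥ 2
        rcases Nat.lt_or_ge 1 m with h | h
        · exact h
        · exfalso
          have : m = 1 := by omega
          subst this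
          simp [sd] at hs
      · rw [Nat.choose_one_right]
        rw [Nat.two_dvd_ne_zero]
        exact Nat.odd_iff.1 hmo
  · -- p odd
    obtain ⟨l, k, hl, hsum, hkdef, hk1, hkm, hsdk, htk, hnd⟩ :=
      exists_good_k' hp (t := p - 1) (by omega) (by omega) (by omega) hs
    have hdvd : (p - 1) ∣ k := by
      have h1 := sd_modEq p k hp2
      rw [hsdk] at h1
      have : k ≡ 0 [MOD p - 1] := h1.trans (Nat.modEq_zero_iff_dvd.2 dvd_rfl)
      exact (Nat.modEq_zero_iff_dvd).1 this
    have heven : Even k := by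
      have h2 : 2 ∣ p - 1 := by
        have : ¬ 2 ∣ p := by
          intro h
          rcases (Nat.Prime.eq_one_or_self_of_dvd hp 2 h) with h' | h' <;> omega
        omega
      exact (even_iff_two_dvd).2 (h2.trans hdvd)
    exact ⟨k, by omega, hkm, hdvd, Or.inl heven, hnd⟩


section valden
variable {p : ℕ} [hp : Fact p.Prime]

lemma val_den_eq {q : ℚ} (h : p ∣ q.den) : padicValRat p q = -(padicValNat p q.den : ℤ) := by
  have hq : q ≠ 0 := by
    intro h0
    rw [h0] at h
    exact hp.out.ne_one (Nat.dvd_one.1 (by simpa using h))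
  have hnum : ¬ p ∣ q.num.natAbs := by
    intro hd
    have : p ∣ 1 := q.reduced ▸ Nat.dvd_gcd hd h
    exact hp.out.ne_one (Nat.dvd_one.1 this)
  have : padicValInt p q.num = 0 := by
    unfold padicValInt
    exact padicValNat.eq_zero_of_not_dvd hnum
  show (padicValInt p q.num : ℤ) - (padicValNat p q.den : ℤ) = _
  rw [this]
  simp

lemma dvd_den_iff {q : ℚ} : p ∣ q.den ↔ padicValRat p q < 0 := by
  constructor
  · intro h
    rw [val_den_eq h]
    have : 1 ≤ padicValNat p q.den :=
      one_le_padicValNat_of_dvd q.den_nz h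
    omega
  · intro h
    by_contra hnd
    have hden : padicValNat p q.den = 0 := padicValNat.eq_zero_of_not_dvd hnd
    have : padicValRat p q = padicValInt p q.num := by
      show (padicValInt p q.num : ℤ) - (padicValNat p q.den : ℤ) = _
      rw [hden]; simp
    rw [this] at h
    omega

lemma not_sq_dvd_den {q : ℚ} (h : -1 ≤ padicValRat p q) : ¬ (p * p) ∣ q.den := by
  intro hsq
  have hdvd : p ∣ q.den := dvd_trans (dvd_mul_right p p) hsq
  have h2 : 2 ≤ padicValNat p q.den := by
    have := (Nat.Prime.pow_dvd_iff_le_factorization hp.out (k := 2) q.den_nz).1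
      (by rwa [pow_two])
    rwa [Nat.factorization_def _ hp.out] at this
  rw [val_den_eq hdvd] at h
  omega

lemma squarefree_den_of_val {q : ℚ} (h : ∀ (r : ℕ), r.Prime → -1 ≤ padicValRat r q) :
    Squarefree q.den := by
  rw [Nat.squarefree_iff_prime_squarefree]
  intro r hr
  haveI : Fact r.Prime := ⟨hr⟩
  exact not_sq_dvd_den (h r hr)

lemma val_add_ge {q r : ℚ} {c : ℤ} (hq : q = 0 ∨ c ≤ padicValRat p q)
    (hr : r = 0 ∨ c ≤ padicValRat p r) : q + r = 0 ∨ c ≤ padicValRat p (q + r) := by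
  rcases hq with rfl | hq
  · simpa using hr
  rcases hr with rfl | hr
  · simpa using Or.inr hq
  by_cases h0 : q + r = 0
  · exact Or.inl h0
  · exact Or.inr (le_trans (le_min hq hr) (padicValRat.min_le_padicValRat_add h0))

end valden

open Finset

section helpers
variable {p : ℕ} [hp : Fact p.Prime]

lemma val_sum_ge {ι : Type*} {s : Finset ι} {f : ι → ℚ} {c : ℤ}
    (h : ∀ i ∈ s, f i = 0 ∨ c ≤ padicValRat p (f i)) :
    (∑ i ∈ s, f i) = 0 ∨ c ≤ padicValRat p (∑ i ∈ s, f i) := by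
  classical
  induction s using Finset.induction_on with
  | empty => simp
  | @insert a s ha ih =>
    rw [Finset.sum_insert ha]
    exact val_add_ge (h a (by simp)) (ih fun i hi => h i (by simp [hi]))

end helpers

lemma lt_two_pow_sub_one : ∀ j, 3 ≤ j → j < 2 ^ (j - 1) := by
  intro j
  induction j with
  | zero => omega
  | succ n ih =>
    intro h
    rcases Nat.lt_or_ge n 3 with h3 | h3
    · interval_cases n <;> simp <;> omega
    · have := ih h3
      have h4 : n + 1 - 1 = (n - 1) + 1 := by omega
      rw [h4, pow_succ]
      omega

lemma padicValNat_le_sub_one {p j : ℕ} (hp2 : 2 ≤ p) (hj : 1 ≤ j) :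
    padicValNat p j ≤ j - 1 := by
  set v := padicValNat p j with hv
  have hd : p ^ v ∣ j := pow_padicValNat_dvd
  have h1 : p ^ v ≤ j := Nat.le_of_dvd (by omega) hd
  have h2 : 2 ^ v ≤ p ^ v := Nat.pow_le_pow_left hp2 v
  have h3 : v < 2 ^ v := Nat.lt_two_pow_self
  omega

lemma padicValNat_le_sub_two {p j : ℕ} (hp2 : 2 ≤ p) (hj : 2 ≤ j)
    (hne : ¬(p = 2 ∧ j = 2)) : padicValNat p j ≤ j - 2 := by
  have hone := padicValNat_le_sub_one hp2 (by omega : 1 ≤ j)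
  by_contra hcon
  have hv : padicValNat p j = j - 1 := by omega
  have hd : p ^ (j - 1) ∣ j := hv ▸ pow_padicValNat_dvd
  have h1 : p ^ (j - 1) ≤ j := Nat.le_of_dvd (by omega) hd
  rcases Nat.lt_or_ge j 3 with h3 | h3
  · have hj2 : j = 2 := by omega
    subst hj2
    simp at h1
    exact hne ⟨by omega, rfl⟩
  · have h2 : 2 ^ (j - 1) ≤ p ^ (j - 1) := Nat.pow_le_pow_left hp2 _
    have := lt_two_pow_sub_one j h3
    omega

section powsum
variable {p : ℕ} [hp : Fact p.Prime]

lemma powsum_pos (ν : ℕ) : 1 ≤ ∑ k ∈ range p, k ^ ν := by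
  have h1 : (1 : ℕ) ∈ range p := by
    simp [Finset.mem_range]
    exact hp.out.one_lt
  calc 1 = 1 ^ ν := (one_pow ν).symm
    _ ≤ ∑ k ∈ range p, k ^ ν :=
      Finset.single_le_sum (f := fun k => k ^ ν) (fun i _ => Nat.zero_le _) h1

lemma powsum_cast (ν : ℕ) (hν : 1 ≤ ν) :
    ((∑ k ∈ range p, k ^ ν : ℕ) : ZMod p) = if (p - 1) ∣ ν then (-1 : ZMod p) else 0 := by
  classical
  haveI : NeZero p := ⟨hp.out.pos.ne'⟩
  push_cast
  have h1 : ∑ k ∈ range p, (k : ZMod p) ^ ν = ∑ x : ZMod p, x ^ ν := by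
    refine Finset.sum_nbij' (i := fun k => ((k : ZMod p))) (j := fun x => x.val)
      ?_ ?_ ?_ ?_ ?_
    · intro a _; exact Finset.mem_univ _
    · intro x _
      simpa [Finset.mem_range] using ZMod.val_lt x
    · intro a ha
      exact ZMod.val_cast_of_lt (Finset.mem_range.1 ha)
    · intro x _
      simp [ZMod.natCast_val, ZMod.cast_id]
    · intro a _; rfl
  rw [h1]
  have h2 : ∑ x : ZMod p, x ^ ν = ∑ u : (ZMod p)ˣ, ((u : ZMod p)) ^ ν := by
    rw [← Finset.add_sum_erase Finset.univ (fun x : ZMod p => x ^ ν)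
      (Finset.mem_univ (0 : ZMod p))]
    rw [zero_pow (by omega), zero_add]
    symm
    refine Finset.sum_nbij'
      (i := fun u : (ZMod p)ˣ => ((u : ZMod p)))
      (j := fun x : ZMod p => if hx : x = (0 : ZMod p) then 1 else Units.mk0 x hx)
      ?_ ?_ ?_ ?_ ?_
    · intro u _
      exact Finset.mem_erase.2 ⟨Units.ne_zero u, Finset.mem_univ _⟩
    · intro x _; exact Finset.mem_univ _
    · intro u _
      rw [dif_neg (Units.ne_zero u)]
      exact Units.ext rfl
    · intro x hx
      rw [dif_neg (Finset.mem_erase.1 hx).1]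
      rfl
    · intro u _; rfl
  rw [h2]
  have h3 := FiniteField.sum_pow_units (ZMod p) ν
  rw [ZMod.card] at h3
  have h4 : ∀ u : (ZMod p)ˣ, ((u : ZMod p)) ^ ν = ((u ^ ν : (ZMod p)ˣ) : ZMod p) := by
    intro u; rw [Units.val_pow_eq_pow_val]
  rw [h3]

end powsum

lemma choose_key (ν i : ℕ) (hi : i ≤ ν) :
    (ν + 1 - i) * ((ν + 1).choose i) = (ν + 1) * ν.choose i := by
  have h1 : ν.choose (ν - i) = ν.choose i := Nat.choose_symm hi
  have h2 := Nat.add_one_mul_choose_eq ν (ν - i)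
  have h3 : (ν + 1).choose (ν - i + 1) = (ν + 1).choose i := by
    rw [← Nat.choose_symm (by omega : ν - i + 1 ≤ ν + 1)]
    congr 1
    omega
  have h4 : ν + 1 - i = ν - i + 1 := by omega
  calc (ν + 1 - i) * ((ν + 1).choose i) = (ν - i + 1) * ((ν + 1).choose (ν - i + 1)) := by
        rw [h4, h3]
    _ = (ν + 1) * ν.choose (ν - i) := by rw [mul_comm]; exact h2.symm
    _ = (ν + 1) * ν.choose i := by rw [h1]

lemma term_eq (ν i : ℕ) (hi : i ≤ ν) (b x : ℚ) :
    b * (((ν + 1).choose i : ℕ) : ℚ) * x / ((ν : ℚ) + 1)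
      = b * ((ν.choose i : ℕ) : ℚ) * x / ((ν + 1 - i : ℕ) : ℚ) := by
  have key := choose_key ν i hi
  have keyQ : ((ν + 1 - i : ℕ) : ℚ) * (((ν + 1).choose i : ℕ) : ℚ)
      = ((ν : ℚ) + 1) * ((ν.choose i : ℕ) : ℚ) := by
    exact_mod_cast congrArg (fun t : ℕ => (t : ℚ)) key
  have h1 : ((ν : ℚ) + 1) ≠ 0 := by positivity
  have h2 : ((ν + 1 - i : ℕ) : ℚ) ≠ 0 := Nat.cast_ne_zero.2 (by omega)
  field_simp
  linear_combination (b * x) * keyQ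

lemma faulhaber_split (p ν : ℕ) (hν : 1 ≤ ν) :
    (p : ℚ) * bernoulli ν = ((∑ k ∈ range p, k ^ ν : ℕ) : ℚ)
      - ∑ i ∈ range ν, bernoulli i * (((ν + 1).choose i : ℕ) : ℚ) * (p : ℚ) ^ (ν + 1 - i)
          / ((ν : ℚ) + 1) := by
  have h := sum_range_pow p ν
  rw [Finset.sum_range_succ] at h
  have h1 : ((ν : ℚ) + 1) ≠ 0 := by positivity
  have hlast : bernoulli ν * (((ν + 1).choose ν : ℕ) : ℚ) * (p : ℚ) ^ (ν + 1 - ν) / ((ν : ℚ) + 1)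
      = (p : ℚ) * bernoulli ν := by
    rw [Nat.choose_succ_self_right, show ν + 1 - ν = 1 by omega, pow_one]
    push_cast
    field_simp
  have hcast : (∑ k ∈ range p, (k : ℚ) ^ ν) = ((∑ k ∈ range p, k ^ ν : ℕ) : ℚ) := by
    push_cast
    rfl
  rw [hcast] at h
  rw [h]
  rw [← hlast]
  push_cast
  ring

lemma bernoulli_odd {ν : ℕ} (hodd : Odd ν) (h1 : 1 < ν) : bernoulli ν = 0 := by
  rw [bernoulli_eq_bernoulli'_of_ne_one (by omega)]
  exact bernoulli'_eq_zero_of_odd hodd h1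

section vscmain
variable {p : ℕ} [hp : Fact p.Prime]

lemma term_val {ν i : ℕ} (hi : i ≤ ν) (hb : bernoulli i ≠ 0) :
    padicValRat p (bernoulli i * (((ν + 1).choose i : ℕ) : ℚ) * (p : ℚ) ^ (ν + 1 - i)
        / ((ν : ℚ) + 1))
      = padicValRat p (bernoulli i) + (padicValNat p (ν.choose i) : ℤ)
        + ((ν + 1 - i : ℕ) : ℤ) - (padicValNat p (ν + 1 - i) : ℤ) := by
  rw [term_eq ν i hi]
  have hc : ((ν.choose i : ℕ) : ℚ) ≠ 0 := Nat.cast_ne_zero.2 (Nat.choose_pos hi).ne'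
  have hp0 : (p : ℚ) ≠ 0 := Nat.cast_ne_zero.2 hp.out.pos.ne'
  have hpj : (p : ℚ) ^ (ν + 1 - i) ≠ 0 := pow_ne_zero _ hp0
  have hjq : ((ν + 1 - i : ℕ) : ℚ) ≠ 0 := Nat.cast_ne_zero.2 (by omega)
  rw [padicValRat.div (mul_ne_zero (mul_ne_zero hb hc) hpj) hjq,
      padicValRat.mul (mul_ne_zero hb hc) hpj,
      padicValRat.mul hb hc,
      padicValRat.pow (p : ℚ), padicValRat.self hp.out.one_lt]
  rw [← padicValRat.of_nat (p := p) (n := ν.choose i),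
      ← padicValRat.of_nat (p := p) (n := ν + 1 - i)]
  push_cast
  ring

lemma bernoulli_val_ge : ∀ ν : ℕ, -1 ≤ padicValRat p (bernoulli ν) := by
  intro ν
  induction ν using Nat.strong_induction_on with
  | _ ν IH =>
  by_cases hb : bernoulli ν = 0
  · simp [hb, padicValRat.zero]
  rcases Nat.eq_zero_or_pos ν with rfl | hν
  · simp [bernoulli_zero, padicValRat.one]
  have hp0 : (p : ℚ) ≠ 0 := Nat.cast_ne_zero.2 hp.out.pos.ne'
  have hsplit := faulhaber_split p ν hν
  have hSv : ((∑ k ∈ range p, k ^ ν : ℕ) : ℚ) = 0 ∨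
      (0 : ℤ) ≤ padicValRat p ((∑ k ∈ range p, k ^ ν : ℕ) : ℚ) := by
    right
    rw [padicValRat.of_nat]
    exact Int.natCast_nonneg _
  have hTv : (∑ i ∈ range ν, bernoulli i * (((ν + 1).choose i : ℕ) : ℚ)
        * (p : ℚ) ^ (ν + 1 - i) / ((ν : ℚ) + 1)) = 0 ∨
      (0 : ℤ) ≤ padicValRat p (∑ i ∈ range ν, bernoulli i * (((ν + 1).choose i : ℕ) : ℚ)
        * (p : ℚ) ^ (ν + 1 - i) / ((ν : ℚ) + 1)) := by
    apply val_sum_ge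
    intro i hi
    have hi' : i < ν := Finset.mem_range.1 hi
    by_cases hbi : bernoulli i = 0
    · left; simp [hbi]
    · right
      rw [term_val (by omega) hbi]
      have h1 := IH i hi'
      have h2 : (0 : ℤ) ≤ (padicValNat p (ν.choose i) : ℤ) := Int.natCast_nonneg _
      have h3 : padicValNat p (ν + 1 - i) ≤ (ν + 1 - i) - 1 :=
        padicValNat_le_sub_one hp.out.two_le (by omega)
      omega
  have hTv' : (-(∑ i ∈ range ν, bernoulli i * (((ν + 1).choose i : ℕ) : ℚ)
        * (p : ℚ) ^ (ν + 1 - i) / ((ν : ℚ) + 1))) = 0 ∨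
      (0 : ℤ) ≤ padicValRat p (-(∑ i ∈ range ν, bernoulli i * (((ν + 1).choose i : ℕ) : ℚ)
        * (p : ℚ) ^ (ν + 1 - i) / ((ν : ℚ) + 1))) := by
    rcases hTv with h | h
    · left; rw [h, neg_zero]
    · right; rwa [padicValRat.neg]
  have hpB : (p : ℚ) * bernoulli ν ≠ 0 := mul_ne_zero hp0 hb
  rcases val_add_ge hSv hTv' with h0 | hge
  · exfalso
    apply hpB
    rw [hsplit, sub_eq_add_neg]
    exact h0
  · have hv : (0 : ℤ) ≤ padicValRat p ((p : ℚ) * bernoulli ν) := by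
      rw [hsplit, sub_eq_add_neg]
      exact hge
    rw [padicValRat.mul hp0 hb, padicValRat.self hp.out.one_lt] at hv
    omega

lemma bernoulli_val_spec {ν : ℕ} (hν : 1 ≤ ν) :
    (((p - 1) ∣ ν ∧ (Even ν ∨ ν = 1)) ∧ padicValRat p (bernoulli ν) = -1) ∨
    (¬((p - 1) ∣ ν ∧ (Even ν ∨ ν = 1)) ∧ 0 ≤ padicValRat p (bernoulli ν)) := by
  have hp2 := hp.out.two_le
  have hp0 : (p : ℚ) ≠ 0 := Nat.cast_ne_zero.2 hp.out.pos.ne'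
  by_cases h1 : ν = 1
  · subst h1
    have hval : padicValRat p (bernoulli 1) = -(padicValNat p 2 : ℤ) := by
      rw [bernoulli_one]
      have h : (-1/2 : ℚ) = -(((2 : ℕ) : ℚ))⁻¹ := by norm_num
      rw [h, padicValRat.neg, padicValRat.inv, padicValRat.of_nat]
    by_cases hP : p = 2
    · subst hP
      left
      refine ⟨⟨by norm_num, Or.inr rfl⟩, ?_⟩
      rw [hval, padicValNat.self (by norm_num)]
      norm_num
    · right
      constructor
      · rintro ⟨hd, -⟩
        have := Nat.le_of_dvd one_pos hd
        omega
      · have hnd : ¬ p ∣ 2 := by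
          intro hd
          have := (Nat.prime_dvd_prime_iff_eq hp.out Nat.prime_two).1 hd
          exact hP this
        rw [hval, padicValNat.eq_zero_of_not_dvd hnd]
        simp
  by_cases hodd : Odd ν
  · right
    constructor
    · rintro ⟨-, he | h1'⟩
      · exact (Nat.not_odd_iff_even.2 he) hodd
      · exact h1 h1'
    · rw [bernoulli_odd hodd (by omega)]
      simp [padicValRat.zero]
  have heven : Even ν := Nat.not_odd_iff_even.1 hodd
  by_cases h2 : ν = 2
  · subst h2
    have hb2 : bernoulli 2 = 1/6 := by
      rw [bernoulli_eq_bernoulli'_of_ne_one (by norm_num), bernoulli'_two]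
    have hval : padicValRat p (bernoulli 2) = -(padicValNat p 6 : ℤ) := by
      rw [hb2]
      have h : (1/6 : ℚ) = (((6 : ℕ) : ℚ))⁻¹ := by norm_num
      rw [h, padicValRat.inv, padicValRat.of_nat]
    by_cases hP : p = 2 ∨ p = 3
    · left
      refine ⟨⟨?_, Or.inl (by norm_num)⟩, ?_⟩
      · rcases hP with rfl | rfl <;> norm_num
      · have h6 : padicValNat p 6 = 1 := by
          have h23 : (6 : ℕ) = 2 * 3 := by norm_num
          rcases hP with rfl | rfl
          · rw [h23, padicValNat.mul (by norm_num) (by norm_num),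
                padicValNat.self (by norm_num),
                padicValNat.eq_zero_of_not_dvd (by norm_num)]
          · rw [h23, padicValNat.mul (by norm_num) (by norm_num),
                padicValNat.self (by norm_num),
                padicValNat.eq_zero_of_not_dvd (by norm_num)]
        rw [hval, h6]
        norm_num
    · right
      constructor
      · rintro ⟨hd, -⟩
        have := Nat.le_of_dvd (by norm_num) hd
        push_neg at hP
        omega
      · have hnd : ¬ p ∣ 6 := by
          intro hd
          have h23 : (6 : ℕ) = 2 * 3 := by norm_num
          rw [h23] at hd
          rcases (Nat.Prime.dvd_mul hp.out).1 hd with h' | h'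
          · exact hP (Or.inl ((Nat.prime_dvd_prime_iff_eq hp.out Nat.prime_two).1 h'))
          · exact hP (Or.inr ((Nat.prime_dvd_prime_iff_eq hp.out Nat.prime_three).1 h'))
        rw [hval, padicValNat.eq_zero_of_not_dvd hnd]
        simp
  -- main case : Even ν, ν ≥ 4
  have hν4 : 4 ≤ ν := by
    have := Nat.even_iff.1 heven
    omega
  have hsplit := faulhaber_split p ν (by omega)
  have hTv : (∑ i ∈ range ν, bernoulli i * (((ν + 1).choose i : ℕ) : ℚ)
        * (p : ℚ) ^ (ν + 1 - i) / ((ν : ℚ) + 1)) = 0 ∨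
      (1 : ℤ) ≤ padicValRat p (∑ i ∈ range ν, bernoulli i * (((ν + 1).choose i : ℕ) : ℚ)
        * (p : ℚ) ^ (ν + 1 - i) / ((ν : ℚ) + 1)) := by
    apply val_sum_ge
    intro i hi
    have hi' : i < ν := Finset.mem_range.1 hi
    by_cases hbi : bernoulli i = 0
    · left; simp [hbi]
    · right
      rw [term_val (by omega) hbi]
      have h1 := bernoulli_val_ge (p := p) i
      have h2 : (0 : ℤ) ≤ (padicValNat p (ν.choose i) : ℤ) := Int.natCast_nonneg _
      have hj2 : 2 ≤ ν + 1 - i := by omega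
      have hnot : ¬(p = 2 ∧ ν + 1 - i = 2) := by
        rintro ⟨hp2', hj2'⟩
        have hie : i = ν - 1 := by omega
        have hio : Odd i := by
          rw [Nat.odd_iff]
          have := Nat.even_iff.1 heven
          omega
        exact hbi (bernoulli_odd hio (by omega))
      have h3 := padicValNat_le_sub_two hp2 hj2 hnot
      omega
  have hSpos := powsum_pos (p := p) ν
  have hSne : ((∑ k ∈ range p, k ^ ν : ℕ) : ℚ) ≠ 0 := Nat.cast_ne_zero.2 (by omega)
  by_cases hdvd : (p - 1) ∣ ν
  · left
    refine ⟨⟨hdvd, Or.inl heven⟩, ?_⟩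
    have hndvd : ¬ p ∣ (∑ k ∈ range p, k ^ ν) := by
      intro hd
      have hc := powsum_cast (p := p) ν (by omega)
      rw [if_pos hdvd, (ZMod.natCast_eq_zero_iff _ _).2 hd] at hc
      have h1 : (1 : ZMod p) = 0 := by linear_combination hc
      exact one_ne_zero h1
    have hSval : padicValRat p ((∑ k ∈ range p, k ^ ν : ℕ) : ℚ) = 0 := by
      rw [padicValRat.of_nat, padicValNat.eq_zero_of_not_dvd hndvd]
      rfl
    have hbne : bernoulli ν ≠ 0 := by
      intro h0
      rw [h0, mul_zero] at hsplit
      rcases hTv with hT0 | hT1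
      · rw [hT0, sub_zero] at hsplit
        exact hSne hsplit.symm
      · rw [show ((∑ k ∈ range p, k ^ ν : ℕ) : ℚ) = (∑ i ∈ range ν, bernoulli i
            * (((ν + 1).choose i : ℕ) : ℚ) * (p : ℚ) ^ (ν + 1 - i) / ((ν : ℚ) + 1)) by
          linarith [hsplit]] at hSval
        omega
    have hval0 : padicValRat p ((p : ℚ) * bernoulli ν) = 0 := by
      rw [hsplit]
      rcases hTv with hT0 | hT1
      · rw [hT0, sub_zero]
        exact hSval
      · have hTne : (∑ i ∈ range ν, bernoulli i * (((ν + 1).choose i : ℕ) : ℚ)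
            * (p : ℚ) ^ (ν + 1 - i) / ((ν : ℚ) + 1)) ≠ 0 := by
          intro h
          rw [h] at hT1
          simp [padicValRat.zero] at hT1
        have hsum_ne : ((∑ k ∈ range p, k ^ ν : ℕ) : ℚ) + -(∑ i ∈ range ν, bernoulli i
            * (((ν + 1).choose i : ℕ) : ℚ) * (p : ℚ) ^ (ν + 1 - i) / ((ν : ℚ) + 1)) ≠ 0 := by
          intro h
          have heq : ((∑ k ∈ range p, k ^ ν : ℕ) : ℚ) = (∑ i ∈ range ν, bernoulli i
              * (((ν + 1).choose i : ℕ) : ℚ) * (p : ℚ) ^ (ν + 1 - i) / ((ν : ℚ) + 1)) := by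
            linarith
          rw [heq] at hSval
          omega
        rw [sub_eq_add_neg, padicValRat.add_eq_of_lt hsum_ne hSne (by simpa using hTne)
          (by rw [padicValRat.neg, hSval]; omega)]
        exact hSval
    rw [padicValRat.mul hp0 hbne, padicValRat.self hp.out.one_lt] at hval0
    omega
  · right
    refine ⟨fun h => hdvd h.1, ?_⟩
    by_cases hbz : bernoulli ν = 0
    · simp [hbz, padicValRat.zero]
    have hdvdS : p ∣ (∑ k ∈ range p, k ^ ν) := by
      have hc := powsum_cast (p := p) ν (by omega)
      rw [if_neg hdvd] at hc
      exact (ZMod.natCast_eq_zero_iff _ _).1 hc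
    have hSval : (1 : ℤ) ≤ padicValRat p ((∑ k ∈ range p, k ^ ν : ℕ) : ℚ) := by
      rw [padicValRat.of_nat]
      exact_mod_cast one_le_padicValNat_of_dvd (by omega) hdvdS
    have hTv' : (-(∑ i ∈ range ν, bernoulli i * (((ν + 1).choose i : ℕ) : ℚ)
          * (p : ℚ) ^ (ν + 1 - i) / ((ν : ℚ) + 1))) = 0 ∨
        (1 : ℤ) ≤ padicValRat p (-(∑ i ∈ range ν, bernoulli i * (((ν + 1).choose i : ℕ) : ℚ)
          * (p : ℚ) ^ (ν + 1 - i) / ((ν : ℚ) + 1))) := by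
      rcases hTv with h | h
      · left; rw [h, neg_zero]
      · right; rwa [padicValRat.neg]
    have hpB : (p : ℚ) * bernoulli ν ≠ 0 := mul_ne_zero hp0 hbz
    rcases val_add_ge (Or.inr hSval) hTv' with h0 | hge
    · exfalso
      apply hpB
      rw [hsplit, sub_eq_add_neg]
      exact h0
    · have hv : (1 : ℤ) ≤ padicValRat p ((p : ℚ) * bernoulli ν) := by
        rw [hsplit, sub_eq_add_neg]
        exact hge
      rw [padicValRat.mul hp0 hbz, padicValRat.self hp.out.one_lt] at hv
      omega

end vscmain

open Finset

-- === new content ===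

lemma coeff_bernoulli_poly (n j : ℕ) :
    (Polynomial.bernoulli n).coeff j
      = if j ≤ n then bernoulli (n - j) * (n.choose j : ℚ) else 0 := by
  rw [Polynomial.bernoulli_def]
  rw [Polynomial.finset_sum_coeff]
  simp only [Polynomial.coeff_monomial]
  rw [Finset.sum_ite_eq' (range (n + 1)) j
    (fun i => bernoulli (n - i) * (n.choose i : ℚ))]
  simp [Nat.lt_succ_iff]

section kellner
variable {p : ℕ} [hp : Fact p.Prime]

/-- denominator of a coefficient `B_k * c` -/
lemma coeff_den_dvd_iff {k c : ℕ} (hc : c ≠ 0) :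
    p ∣ (bernoulli k * ((c : ℕ) : ℚ)).den ↔
      (1 ≤ k ∧ ((p - 1) ∣ k ∧ (Even k ∨ k = 1)) ∧ ¬ p ∣ c) := by
  rcases Nat.eq_zero_or_pos k with rfl | hk
  · simp only [bernoulli_zero, one_mul]
    constructor
    · intro h
      rw [Rat.den_natCast] at h
      exact absurd (Nat.dvd_one.1 h) hp.out.ne_one
    · rintro ⟨h, -, -⟩; omega
  have hcq : ((c : ℕ) : ℚ) ≠ 0 := Nat.cast_ne_zero.2 hc
  constructor
  · intro h
    have hq : bernoulli k * ((c : ℕ) : ℚ) ≠ 0 := by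
      intro h0
      rw [h0] at h
      simp only [Rat.den_zero] at h
      exact hp.out.ne_one (Nat.dvd_one.1 h)
    have hb : bernoulli k ≠ 0 := fun h0 => hq (by rw [h0, zero_mul])
    have hv := dvd_den_iff.1 h
    rw [padicValRat.mul hb hcq, padicValRat.of_nat] at hv
    rcases bernoulli_val_spec (p := p) hk with ⟨hcond, hval⟩ | ⟨hncond, hge⟩
    · refine ⟨hk, hcond, ?_⟩
      intro hdvd
      have h1 : 1 ≤ padicValNat p c := one_le_padicValNat_of_dvd (by omega) hdvd
      omega
    · have h2 : (0 : ℤ) ≤ (padicValNat p c : ℤ) := Int.natCast_nonneg _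
      omega
  · rintro ⟨-, hcond, hndvd⟩
    rcases bernoulli_val_spec (p := p) hk with ⟨-, hval⟩ | ⟨hncond, -⟩
    · have hb : bernoulli k ≠ 0 := by
        intro h0
        rw [h0, padicValRat.zero] at hval
        omega
      apply dvd_den_iff.2
      rw [padicValRat.mul hb hcq, padicValRat.of_nat, hval,
          padicValNat.eq_zero_of_not_dvd hndvd]
      omega
    · exact absurd hcond hncond

lemma dvd_DB_iff {n : ℕ} (hn : 1 ≤ n) :
    p ∣ polyDenom (Polynomial.bernoulli n) ↔ (p ≤ sd p n ∨ (p - 1) ∣ n) := by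
  have hp2 := hp.out.two_le
  rw [prime_dvd_polyDenom_iff hp.out]
  constructor
  · rintro ⟨j, hj⟩
    rw [coeff_bernoulli_poly] at hj
    by_cases hjn : j ≤ n
    · rw [if_pos hjn] at hj
      obtain ⟨hk1, hcond, hndvd⟩ := (coeff_den_dvd_iff (Nat.choose_pos hjn).ne').1 hj
      rcases eq_or_lt_of_le (show n - j ≤ n by omega) with hkn | hkn
      · right
        exact hkn ▸ hcond.1
      · left
        have hj1 : 1 ≤ j := by omega
        have hsd := (not_dvd_choose_iff_sd hp.out hjn).1 hndvd
        have h1 : p - 1 ≤ sd p (n - j) := sd_ge_of_modeq hp2 hk1 hcond.1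
        have h2 : 1 ≤ sd p j := sd_pos hp2 hj1
        omega
    · rw [if_neg hjn] at hj
      simp only [Rat.den_zero] at hj
      exact absurd (Nat.dvd_one.1 hj) hp.out.ne_one
  · intro h
    rcases h with hsd | hdvd
    · obtain ⟨k, hk1, hkm, hkdvd, hke, hknd⟩ := exists_good_k hp.out hsd
      refine ⟨n - k, ?_⟩
      rw [coeff_bernoulli_poly, if_pos (by omega), show n - (n - k) = k by omega]
      have hcs : n.choose (n - k) = n.choose k := Nat.choose_symm (by omega)
      rw [hcs]
      exact (coeff_den_dvd_iff (Nat.choose_pos (by omega)).ne').2 ⟨hk1, ⟨hkdvd, hke⟩, hknd⟩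
    · by_cases hpar : Even n ∨ n = 1
      · refine ⟨0, ?_⟩
        rw [coeff_bernoulli_poly, if_pos (Nat.zero_le n), Nat.sub_zero, Nat.choose_zero_right]
        exact (coeff_den_dvd_iff one_ne_zero).2 ⟨hn, ⟨hdvd, hpar⟩,
          fun h => hp.out.ne_one (Nat.dvd_one.1 h)⟩
      · -- n odd > 1, so p = 2
        push_neg at hpar
        have hodd : ¬ Even n := hpar.1
        have hp2' : p = 2 := by
          by_contra hne
          have hodd' : Odd p := hp.out.odd_of_ne_two hne
          have h2 : 2 ∣ p - 1 := by
            rcases hodd' with ⟨t, ht⟩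
            exact ⟨t, by omega⟩
          exact hodd ((even_iff_two_dvd).2 (h2.trans hdvd))
        subst hp2'
        refine ⟨n - 1, ?_⟩
        rw [coeff_bernoulli_poly, if_pos (by omega), show n - (n - 1) = 1 by omega]
        have hcs : n.choose (n - 1) = n := by
          rw [Nat.choose_symm (show (1:ℕ) ≤ n by omega), Nat.choose_one_right]
        rw [hcs]
        refine (coeff_den_dvd_iff (by omega)).2 ⟨le_rfl, ⟨one_dvd _, Or.inr rfl⟩, ?_⟩
        intro hd
        exact hodd ((even_iff_two_dvd).2 hd)
end kellner

section kellner2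
variable {p : ℕ} [hp : Fact p.Prime]

lemma coeff_D (m j : ℕ) :
    (Polynomial.bernoulli m - Polynomial.C (bernoulli m)).coeff j
      = if 1 ≤ j ∧ j ≤ m then bernoulli (m - j) * (m.choose j : ℚ) else 0 := by
  rw [Polynomial.coeff_sub, coeff_bernoulli_poly, Polynomial.coeff_C]
  rcases Nat.eq_zero_or_pos j with rfl | hj
  · simp
  · have hj0 : j ≠ 0 := by omega
    by_cases hjm : j ≤ m
    · simp [hj0, hjm, show 1 ≤ j from hj]
    · simp [hj0, hjm]

lemma dvd_D_iff {m : ℕ} (hm : 1 ≤ m) :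
    p ∣ polyDenom (Polynomial.bernoulli m - Polynomial.C (bernoulli m)) ↔ p ≤ sd p m := by
  have hp2 := hp.out.two_le
  rw [prime_dvd_polyDenom_iff hp.out]
  constructor
  · rintro ⟨j, hj⟩
    rw [coeff_D] at hj
    by_cases hjm : 1 ≤ j ∧ j ≤ m
    · rw [if_pos hjm] at hj
      obtain ⟨hk1, hcond, hndvd⟩ := (coeff_den_dvd_iff (Nat.choose_pos hjm.2).ne').1 hj
      have hsd := (not_dvd_choose_iff_sd hp.out hjm.2).1 hndvd
      have h1 : p - 1 ≤ sd p (m - j) := sd_ge_of_modeq hp2 hk1 hcond.1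
      have h2 : 1 ≤ sd p j := sd_pos hp2 hjm.1
      omega
    · rw [if_neg hjm] at hj
      simp only [Rat.den_zero] at hj
      exact absurd (Nat.dvd_one.1 hj) hp.out.ne_one
  · intro hsd
    obtain ⟨k, hk1, hkm, hkdvd, hke, hknd⟩ := exists_good_k hp.out hsd
    refine ⟨m - k, ?_⟩
    rw [coeff_D, if_pos (by omega), show m - (m - k) = k by omega]
    have hcs : m.choose (m - k) = m.choose k := Nat.choose_symm (by omega)
    rw [hcs]
    exact (coeff_den_dvd_iff (Nat.choose_pos (by omega)).ne').2 ⟨hk1, ⟨hkdvd, hke⟩, hknd⟩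

lemma dvd_Spoly_iff {n : ℕ} :
    p ∣ polyDenom (Spoly n) ↔ (p ∣ (n + 1) ∨ p ≤ sd p (n + 1)) := by
  have hp2 := hp.out.two_le
  set m := n + 1 with hm
  have hmq : ((n : ℚ) + 1) = ((m : ℕ) : ℚ) := by push_cast [hm]; ring
  have hm1 : 1 ≤ m := by omega
  have hmq0 : ((m : ℕ) : ℚ) ≠ 0 := Nat.cast_ne_zero.2 (by omega)
  have hcoeff : ∀ j, (Spoly n).coeff j = ((m : ℕ) : ℚ)⁻¹ *
      (if 1 ≤ j ∧ j ≤ m then bernoulli (m - j) * (m.choose j : ℚ) else 0) := by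
    intro j
    rw [Spoly, Polynomial.coeff_C_mul, hmq, coeff_D]
  rw [prime_dvd_polyDenom_iff hp.out]
  constructor
  · rintro ⟨j, hj⟩
    rw [hcoeff j] at hj
    by_cases hjm : 1 ≤ j ∧ j ≤ m
    · rw [if_pos hjm] at hj
      by_cases hpm : p ∣ m
      · exact Or.inl hpm
      right
      -- p ∤ m : valuation analysis
      have hvm : padicValNat p m = 0 := padicValNat.eq_zero_of_not_dvd hpm
      have hq : ((m : ℕ) : ℚ)⁻¹ * (bernoulli (m - j) * (m.choose j : ℚ)) ≠ 0 := by
        intro h0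
        rw [h0] at hj
        simp only [Rat.den_zero] at hj
        exact hp.out.ne_one (Nat.dvd_one.1 hj)
      have hbc : bernoulli (m - j) * ((m.choose j : ℕ) : ℚ) ≠ 0 := by
        intro h0
        exact hq (by rw [h0, mul_zero])
      have hb : bernoulli (m - j) ≠ 0 := fun h0 => hbc (by rw [h0, zero_mul])
      have hcq : ((m.choose j : ℕ) : ℚ) ≠ 0 := Nat.cast_ne_zero.2 (Nat.choose_pos hjm.2).ne'
      have hv := dvd_den_iff.1 hj
      rw [padicValRat.mul (by simpa using hmq0) hbc, padicValRat.inv,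
          padicValRat.of_nat, hvm, padicValRat.mul hb hcq, padicValRat.of_nat] at hv
      -- now v(B_{m-j}) + val(choose) < 0
      have hk1 : 1 ≤ m - j := by
        by_contra hk0
        have : m - j = 0 := by omega
        rw [this, bernoulli_zero, padicValRat.one] at hv
        have := Int.natCast_nonneg (padicValNat p (m.choose j))
        omega
      rcases bernoulli_val_spec (p := p) hk1 with ⟨hcond, hval⟩ | ⟨-, hge⟩
      · have hvc : padicValNat p (m.choose j) = 0 := by omega
        have hndvd : ¬ p ∣ m.choose j := by
          intro hd
          have := one_le_padicValNat_of_dvd (Nat.choose_pos hjm.2).ne' hd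
          omega
        have hsd := (not_dvd_choose_iff_sd hp.out hjm.2).1 hndvd
        have h1 : p - 1 ≤ sd p (m - j) := sd_ge_of_modeq hp2 hk1 hcond.1
        have h2 : 1 ≤ sd p j := sd_pos hp2 hjm.1
        omega
      · have := Int.natCast_nonneg (padicValNat p (m.choose j))
        omega
    · rw [if_neg hjm, mul_zero] at hj
      simp only [Rat.den_zero] at hj
      exact absurd (Nat.dvd_one.1 hj) hp.out.ne_one
  · intro h
    by_cases hpm : p ∣ m
    · -- use leading coefficient j = m
      refine ⟨m, ?_⟩
      rw [hcoeff m, if_pos ⟨hm1, le_rfl⟩, Nat.sub_self, bernoulli_zero, Nat.choose_self]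
      apply dvd_den_iff.2
      have : (1 : ℚ) * ((1 : ℕ) : ℚ) = 1 := by norm_num
      rw [this, mul_one, padicValRat.inv, padicValRat.of_nat]
      have h1 : 1 ≤ padicValNat p m := one_le_padicValNat_of_dvd (by omega) hpm
      omega
    · rcases h with h | hsd
      · exact absurd h hpm
      obtain ⟨k, hk1, hkm, hkdvd, hke, hknd⟩ := exists_good_k hp.out hsd
      refine ⟨m - k, ?_⟩
      rw [hcoeff (m - k), if_pos (by omega), show m - (m - k) = k by omega,
          Nat.choose_symm (by omega : k ≤ m)]
      apply dvd_den_iff.2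
      rcases bernoulli_val_spec (p := p) hk1 with ⟨-, hval⟩ | ⟨hncond, -⟩
      · have hb : bernoulli k ≠ 0 := by
          intro h0
          rw [h0, padicValRat.zero] at hval
          omega
        have hcq : ((m.choose k : ℕ) : ℚ) ≠ 0 := Nat.cast_ne_zero.2 (Nat.choose_pos (by omega)).ne'
        rw [padicValRat.mul (by simpa using hmq0) (mul_ne_zero hb hcq), padicValRat.inv,
            padicValRat.of_nat, padicValRat.mul hb hcq, padicValRat.of_nat, hval,
            padicValNat.eq_zero_of_not_dvd hpm, padicValNat.eq_zero_of_not_dvd hknd]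
        omega
      · exact absurd ⟨hkdvd, hke⟩ hncond

lemma digit_equiv {n : ℕ} (hn : 1 ≤ n) :
    (p ≤ sd p n ∨ (p - 1) ∣ n) ↔ (p ∣ (n + 1) ∨ p ≤ sd p (n + 1)) := by
  have hp2 := hp.out.two_le
  constructor
  · intro h
    by_cases hd : p ∣ (n + 1)
    · exact Or.inl hd
    right
    rw [sd_succ_of_not_dvd hp2 hd]
    rcases h with h | h
    · omega
    · have := sd_ge_of_modeq hp2 hn h
      omega
  · intro h
    have key : p - 1 ≤ sd p n := by
      rcases h with h | h
      · exact sd_ge_of_dvd_succ hp2 h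
      · by_cases hd : p ∣ (n + 1)
        · exact sd_ge_of_dvd_succ hp2 hd
        · rw [sd_succ_of_not_dvd hp2 hd] at h
          omega
    rcases Nat.lt_or_ge (sd p n) p with hlt | hge
    · right
      have heq : sd p n = p - 1 := by omega
      have h1 : (p - 1) ∣ sd p n := heq ▸ dvd_rfl
      exact (Nat.modEq_zero_iff_dvd).1 ((sd_modEq p n hp2).trans (Nat.modEq_zero_iff_dvd.2 h1))
    · exact Or.inl hge

end kellner2

lemma squarefree_prod_primes {s : Finset ℕ} (h : ∀ q ∈ s, q.Prime) :
    Squarefree (∏ q ∈ s, q) := by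
  classical
  induction s using Finset.induction_on with
  | empty => simpa using squarefree_one
  | @insert a s ha ih =>
    rw [Finset.prod_insert ha]
    have hcop : Nat.Coprime a (∏ q ∈ s, q) := by
      apply Nat.Coprime.prod_right
      intro q hq
      exact (Nat.coprime_primes (h a (by simp)) (h q (by simp [hq]))).2
        (fun he => ha (he ▸ hq))
    rw [Nat.squarefree_mul hcop]
    exact ⟨(h a (by simp)).squarefree, ih fun q hq => h q (by simp [hq])⟩

lemma squarefree_rad (m : ℕ) : Squarefree (rad m) :=
  squarefree_prod_primes fun q hq => Nat.prime_of_mem_primeFactors hq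

lemma prime_dvd_rad_iff {p m : ℕ} (hp : p.Prime) (hm : m ≠ 0) : p ∣ rad m ↔ p ∣ m := by
  constructor
  · intro h
    rcases (Prime.dvd_finset_prod_iff hp.prime _).1 h with ⟨q, hq, hdvd⟩
    have := (Nat.prime_dvd_prime_iff_eq hp (Nat.prime_of_mem_primeFactors hq)).1 hdvd
    exact this ▸ Nat.dvd_of_mem_primeFactors hq
  · intro h
    exact Finset.dvd_prod_of_mem _ (Nat.mem_primeFactors.2 ⟨hp, h, hm⟩)

lemma eq_of_squarefree_same_primes {a b : ℕ} (ha : Squarefree a) (hb : Squarefree b)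
    (h : ∀ p, p.Prime → (p ∣ a ↔ p ∣ b)) : a = b := by
  have hab : a ∣ b := by
    rw [← Nat.prod_primeFactors_of_squarefree ha]
    apply Finset.prod_primes_dvd
    · intro q hq
      exact (Nat.prime_of_mem_primeFactors hq).prime
    · intro q hq
      exact (h q (Nat.prime_of_mem_primeFactors hq)).1 (Nat.dvd_of_mem_primeFactors hq)
  have hba : b ∣ a := by
    rw [← Nat.prod_primeFactors_of_squarefree hb]
    apply Finset.prod_primes_dvd
    · intro q hq
      exact (Nat.prime_of_mem_primeFactors hq).prime
    · intro q hq
      exact (h q (Nat.prime_of_mem_primeFactors hq)).2 (Nat.dvd_of_mem_primeFactors hq)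
  exact Nat.dvd_antisymm hab hba

lemma squarefree_DB (n : ℕ) : Squarefree (polyDenom (Polynomial.bernoulli n)) := by
  apply squarefree_polyDenom
  intro j
  rw [coeff_bernoulli_poly]
  by_cases hjn : j ≤ n
  · rw [if_pos hjn]
    by_cases hq : bernoulli (n - j) * ((n.choose j : ℕ) : ℚ) = 0
    · rw [hq]
      simpa using squarefree_one
    · apply squarefree_den_of_val
      intro r hr
      haveI : Fact r.Prime := ⟨hr⟩
      have hb : bernoulli (n - j) ≠ 0 := fun h0 => hq (by rw [h0, zero_mul])
      have hcq : ((n.choose j : ℕ) : ℚ) ≠ 0 := fun h0 => hq (by rw [h0, mul_zero])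
      rw [padicValRat.mul hb hcq, padicValRat.of_nat]
      have h1 := bernoulli_val_ge (p := r) (n - j)
      have h2 := Int.natCast_nonneg (padicValNat r (n.choose j))
      omega
  · rw [if_neg hjn]
    simpa using squarefree_one


/-- For `n ≥ 1`, `DB n = rad (denom (S_n(x))) = rad ((n+1) · D_{n+1})`. -/
theorem stmt_4 (n : ℕ) (hn : 1 ≤ n) :
    DB n = rad (polyDenom (Spoly n)) ∧ DB n = rad ((n + 1) * D (n + 1)) := by
  have hsfDB : Squarefree (DB n) := squarefree_DB n
  constructor
  · apply eq_of_squarefree_same_primes hsfDB (squarefree_rad _)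
    intro p hp
    haveI : Fact p.Prime := ⟨hp⟩
    rw [prime_dvd_rad_iff hp (polyDenom_pos (Spoly n)).ne']
    rw [DB, dvd_DB_iff hn, dvd_Spoly_iff]
    exact digit_equiv hn
  · apply eq_of_squarefree_same_primes hsfDB (squarefree_rad _)
    intro p hp
    haveI : Fact p.Prime := ⟨hp⟩
    have hD : (n + 1) * D (n + 1) ≠ 0 := by
      have := polyDenom_pos (Polynomial.bernoulli (n+1) - Polynomial.C (bernoulli (n+1)))
      have : 0 < D (n + 1) := by rw [D]; exact this
      positivity
    rw [prime_dvd_rad_iff hp hD]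
    rw [DB, dvd_DB_iff hn, Nat.Prime.dvd_mul hp, D, dvd_D_iff (by omega)]
    exact digit_equiv hn
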